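/- For fixed k ≥ 2, the variance of the replication load distribution of a fully populated k-ary prefix tree of height h, namely Var(h) = [k^{−h}·(h(k−1))² + Σ_{j=1}^{h} k^{j−h−1}(k−1)·((h−j)(k−1))²] − [k^{−h}·h(k−1) + Σ_{j=1}^{h} k^{j−h−1}(k−1)·(h−j)(k−1)]², tends to k as h → ∞; hence the standard deviation of the replication load is √k + O(k^{−h}). -/

import Mathlib

open Filter Finset

lemma repl_sum_reindex (k : ℕ) (hk : 2 ≤ k) (p h : ℕ) :
    (∑ j ∈ Finset.Icc 1 h,
        (k : ℝ) ^ ((j : ℤ) - h - 1) * ((k : ℝ) - 1) *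
          (((h : ℝ) - j) * ((k : ℝ) - 1)) ^ p)
      = ∑ i ∈ Finset.range h,
          ((k : ℝ) - 1) ^ (p + 1) * (i : ℝ) ^ p * ((k : ℝ)⁻¹) ^ (i + 1) := by
  refine Finset.sum_nbij' (fun j => h - j) (fun i => h - i) ?_ ?_ ?_ ?_ ?_
  · intro j hj; simp only [Finset.mem_Icc] at hj; simp only [Finset.mem_range]; omega
  · intro i hi; simp only [Finset.mem_range] at hi; simp only [Finset.mem_Icc]; omega
  · intro j hj; simp only [Finset.mem_Icc] at hj; omega
  · intro i hi; simp only [Finset.mem_range] at hi; omega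
  · intro j hj
    simp only [Finset.mem_Icc] at hj
    have hj1 : 1 ≤ j := hj.1
    have hj2 : j ≤ h := hj.2
    have e1 : ((j : ℤ) - h - 1) = -((h - j + 1 : ℕ) : ℤ) := by
      push_cast [Nat.cast_sub hj2]; ring
    rw [e1, zpow_neg, zpow_natCast, ← inv_pow]
    have e2 : ((h - j : ℕ) : ℝ) = (h : ℝ) - j := by
      push_cast [Nat.cast_sub hj2]; ring
    rw [e2]
    have e3 : h - j + 1 = (h - j) + 1 := rfl
    rw [e3, mul_pow]
    ring

/-- **Asymptotic variance of the replication load** (fully populated `k`-ary prefix tree,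
`k ≥ 2`): the variance
`Var(h) = [k^{−h}·(h(k−1))² + Σ_{j=1}^{h} k^{j−h−1}(k−1)·((h−j)(k−1))²]
          − [k^{−h}·h(k−1) + Σ_{j=1}^{h} k^{j−h−1}(k−1)·(h−j)(k−1)]²`
of the replication-load distribution tends to `k` as the height `h → ∞`
(hence the standard deviation of the replication load is `√k + O(k^{−h})`). -/
theorem replication_load_variance_tendsto (k : ℕ) (hk : 2 ≤ k) :
    Filter.Tendsto
      (fun h : ℕ =>
        ((k : ℝ) ^ (-(h : ℤ)) * ((h : ℝ) * ((k : ℝ) - 1)) ^ 2 +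
            ∑ j ∈ Finset.Icc 1 h,
              (k : ℝ) ^ ((j : ℤ) - h - 1) * ((k : ℝ) - 1) *
                (((h : ℝ) - j) * ((k : ℝ) - 1)) ^ 2) -
          ((k : ℝ) ^ (-(h : ℤ)) * ((h : ℝ) * ((k : ℝ) - 1)) +
            ∑ j ∈ Finset.Icc 1 h,
              (k : ℝ) ^ ((j : ℤ) - h - 1) * ((k : ℝ) - 1) *
                (((h : ℝ) - j) * ((k : ℝ) - 1))) ^ 2)
      Filter.atTop (nhds (k : ℝ)) := by
  have hK1 : (1 : ℝ) < (k : ℝ) := by exact_mod_cast (by omega : 1 < k)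
  have hK0 : (0 : ℝ) < (k : ℝ) := by linarith
  set K : ℝ := (k : ℝ) with hKdef
  set x : ℝ := K⁻¹ with hxdef
  have hx0 : 0 < x := inv_pos.2 hK0
  have hx1 : x < 1 := inv_lt_one_of_one_lt₀ hK1
  have hxn : ‖x‖ < 1 := by rw [Real.norm_eq_abs, abs_of_pos hx0]; exact hx1
  have h1x : (1 : ℝ) - x ≠ 0 := by nlinarith
  have hKne : K ≠ 0 := ne_of_gt hK0
  -- HasSum facts
  have hgeom : HasSum (fun n : ℕ => x ^ n) (1 - x)⁻¹ :=
    hasSum_geometric_of_norm_lt_one hxn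
  have h1 : HasSum (fun n : ℕ => (n : ℝ) * x ^ n) (x / (1 - x) ^ 2) :=
    hasSum_coe_mul_geometric_of_norm_lt_one hxn
  have hc : HasSum (fun n : ℕ => ((n + 2).choose 2 : ℝ) * x ^ n) (1 / (1 - x) ^ 3) :=
    hasSum_choose_mul_geometric_of_norm_lt_one 2 hxn
  have h2 : HasSum (fun n : ℕ => (n : ℝ) ^ 2 * x ^ n)
      (2 * (1 / (1 - x) ^ 3) - 3 * (x / (1 - x) ^ 2) - 2 * (1 - x)⁻¹) := by
    have := ((hc.mul_left 2).sub (h1.mul_left 3)).sub (hgeom.mul_left 2)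
    convert this using 2 with n; rfl
    have hch : (((n + 2).choose 2 : ℕ) : ℝ) = (n + 2) * (n + 1) / 2 := by
      rw [Nat.cast_choose_two]; push_cast; ring
    rw [hch]; ring
  -- rescaled sums
  have S1 : HasSum (fun i : ℕ => (K - 1) ^ 2 * (i : ℝ) ^ 1 * x ^ (i + 1))
      ((K - 1) ^ 2 * x * (x / (1 - x) ^ 2)) := by
    have := h1.mul_left ((K - 1) ^ 2 * x)
    convert this using 2 with n; rfl
    rw [pow_succ]; ring
  have S2 : HasSum (fun i : ℕ => (K - 1) ^ 3 * (i : ℝ) ^ 2 * x ^ (i + 1))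
      ((K - 1) ^ 3 * x *
        (2 * (1 / (1 - x) ^ 3) - 3 * (x / (1 - x) ^ 2) - 2 * (1 - x)⁻¹)) := by
    have := h2.mul_left ((K - 1) ^ 3 * x)
    convert this using 2 with n; rfl
    rw [pow_succ]; ring
  -- vanishing boundary terms
  have A2 : Tendsto (fun h : ℕ => x ^ h * ((h : ℝ) * (K - 1)) ^ 2) atTop (nhds 0) := by
    have := (tendsto_pow_const_mul_const_pow_of_abs_lt_one 2
        (by rw [abs_of_pos hx0]; exact hx1)).const_mul ((K - 1) ^ 2)
    rw [mul_zero] at this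
    convert this using 2 with n
    ring
  have A1 : Tendsto (fun h : ℕ => x ^ h * ((h : ℝ) * (K - 1))) atTop (nhds 0) := by
    have := (tendsto_pow_const_mul_const_pow_of_abs_lt_one 1
        (by rw [abs_of_pos hx0]; exact hx1)).const_mul (K - 1)
    rw [mul_zero] at this
    convert this using 2 with n
    ring
  -- combine
  have main : Tendsto
      (fun h : ℕ =>
        (x ^ h * ((h : ℝ) * (K - 1)) ^ 2 +
            ∑ i ∈ Finset.range h, (K - 1) ^ 3 * (i : ℝ) ^ 2 * x ^ (i + 1)) -
          (x ^ h * ((h : ℝ) * (K - 1)) +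
            ∑ i ∈ Finset.range h, (K - 1) ^ 2 * (i : ℝ) ^ 1 * x ^ (i + 1)) ^ 2)
      atTop
      (nhds ((0 + (K - 1) ^ 3 * x *
          (2 * (1 / (1 - x) ^ 3) - 3 * (x / (1 - x) ^ 2) - 2 * (1 - x)⁻¹)) -
        (0 + (K - 1) ^ 2 * x * (x / (1 - x) ^ 2)) ^ 2)) :=
    (A2.add S2.tendsto_sum_nat).sub ((A1.add S1.tendsto_sum_nat).pow 2)
  have limeq : (0 + (K - 1) ^ 3 * x *
        (2 * (1 / (1 - x) ^ 3) - 3 * (x / (1 - x) ^ 2) - 2 * (1 - x)⁻¹)) -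
      (0 + (K - 1) ^ 2 * x * (x / (1 - x) ^ 2)) ^ 2 = K := by
    have hKm1 : K - 1 ≠ 0 := by nlinarith
    have hx' : (1 : ℝ) - K⁻¹ ≠ 0 := by rw [← hxdef]; exact h1x
    rw [hxdef]
    field_simp
    ring
  rw [limeq] at main
  apply main.congr
  intro h
  have hz : K ^ (-(h : ℤ)) = x ^ h := by
    rw [zpow_neg, zpow_natCast, hxdef, inv_pow]
  have e2 := repl_sum_reindex k hk 2 h
  have e1 := repl_sum_reindex k hk 1 h
  simp only [pow_one] at e1
  rw [e2, e1, hz, ← hKdef]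
  norm_num [hxdef, inv_pow]
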